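/- The ring B_n = ℂ[e,f,h,x,y]/(e y² + h x y - f x² - (h² + 4ef)^{n+1}) is an integral domain for every n ≥ 1. -/

import Mathlib

open MvPolynomial

/-- The variables: `0 ↦ e, 1 ↦ f, 2 ↦ h, 3 ↦ x, 4 ↦ y`. -/
noncomputable def bnRelation (n : ℕ) : MvPolynomial (Fin 5) ℂ :=
  X 0 * X 4 ^ 2 + X 2 * X 3 * X 4 - X 1 * X 3 ^ 2 - (X 2 ^ 2 + 4 * X 0 * X 1) ^ (n + 1)

noncomputable abbrev S4 : Type := MvPolynomial (Fin 4) ℂ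

/-- The equivalence isolating the last variable `y`. -/
noncomputable def psiEq : MvPolynomial (Fin 5) ℂ ≃ₐ[ℂ] Polynomial S4 :=
  (renameEquiv ℂ (Equiv.swap 0 4)).trans (finSuccEquiv ℂ 4)

/-- The image of `bnRelation n`, as a quadratic in `y` with coefficients in
`ℂ[f,h,x,e]` (variables `0 ↦ f, 1 ↦ h, 2 ↦ x, 3 ↦ e`). -/
noncomputable def Pn (n : ℕ) : Polynomial S4 :=
  Polynomial.C (X 3) * Polynomial.X ^ 2 + Polynomial.C (X 1 * X 2) * Polynomial.X +
    Polynomial.C (-(X 0 * X 2 ^ 2 + (X 1 ^ 2 + 4 * X 3 * X 0) ^ (n + 1)))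

theorem psi_bn (n : ℕ) : psiEq (bnRelation n) = Pn n := by
  have e0 : psiEq (X 0) = Polynomial.C (X 3) := by
    have h : (Equiv.swap (0:Fin 5) 4) 0 = Fin.succ 3 := by decide
    simp [psiEq, h, finSuccEquiv_X_succ]
    exact finSuccEquiv_X_succ (j := 3)
  have e1 : psiEq (X 1) = Polynomial.C (X 0) := by
    simp only [psiEq, AlgEquiv.trans_apply, renameEquiv_apply, rename_X]
    exact finSuccEquiv_X_succ (j := 0)
  have e2 : psiEq (X 2) = Polynomial.C (X 1) := by
    simp only [psiEq, AlgEquiv.trans_apply, renameEquiv_apply, rename_X]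
    exact finSuccEquiv_X_succ (j := 1)
  have e3 : psiEq (X 3) = Polynomial.C (X 2) := by
    simp only [psiEq, AlgEquiv.trans_apply, renameEquiv_apply, rename_X]
    exact finSuccEquiv_X_succ (j := 2)
  have e4 : psiEq (X 4) = Polynomial.X := by
    have h : (Equiv.swap (0:Fin 5) 4) 4 = 0 := by decide
    simp [psiEq, h, finSuccEquiv_X_zero]
  simp only [bnRelation, Pn, map_add, map_sub, map_mul, map_pow, map_ofNat, e0, e1, e2, e3, e4]
  simp only [map_neg, Polynomial.C_mul, Polynomial.C_add, Polynomial.C_pow, map_ofNat]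
  ring

lemma prime_X3 : Prime (X 3 : S4) := by
  have h0 : Prime ((finSuccEquiv ℂ 3) (X 0 : S4)) := by
    rw [finSuccEquiv_X_zero]
    exact Polynomial.prime_X
  have h0' : Prime (X 0 : S4) :=
    (MulEquiv.prime_iff (finSuccEquiv ℂ 3).toMulEquiv).mp (by simpa using h0)
  have := (MulEquiv.prime_iff (renameEquiv ℂ (Equiv.swap (0:Fin 4) 3)).toMulEquiv).mpr h0'
  simpa using this

lemma X3_not_dvd : ¬ ((X 3 : S4) ∣ X 1 * X 2) := by
  rintro ⟨q, hq⟩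
  have := congrArg (eval fun i => if i = 3 then 0 else (1:ℂ)) hq
  simp at this

lemma Pn_coeff2 (n : ℕ) : (Pn n).coeff 2 = X 3 := by
  simp only [Pn, Polynomial.coeff_add, Polynomial.coeff_C_mul, Polynomial.coeff_X_pow,
    Polynomial.coeff_X, Polynomial.coeff_C]
  norm_num

lemma Pn_coeff1 (n : ℕ) : (Pn n).coeff 1 = X 1 * X 2 := by
  simp only [Pn, Polynomial.coeff_add, Polynomial.coeff_C_mul, Polynomial.coeff_X_pow,
    Polynomial.coeff_X, Polynomial.coeff_C]
  norm_num

lemma Pn_natDegree (n : ℕ) : (Pn n).natDegree = 2 :=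
  Polynomial.natDegree_quadratic (MvPolynomial.X_ne_zero 3)

lemma Pn_leadingCoeff (n : ℕ) : (Pn n).leadingCoeff = X 3 :=
  Polynomial.leadingCoeff_quadratic (MvPolynomial.X_ne_zero 3)

lemma Pn_ne_zero (n : ℕ) : Pn n ≠ 0 := by
  intro h
  exact MvPolynomial.X_ne_zero (3 : Fin 4)
    (by rw [← Pn_coeff2 n, h]; simp)

/-- `Pn` has no root in `S4`. -/
lemma Pn_no_root (n : ℕ) (r : S4) : (Pn n).eval r ≠ 0 := by
  intro h
  simp only [Pn, Polynomial.eval_add, Polynomial.eval_mul, Polynomial.eval_pow,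
    Polynomial.eval_C, Polynomial.eval_X] at h
  have h2 := congrArg (eval fun i => if i = 1 then 1 else (0:ℂ)) h
  simp at h2

lemma unit_of_deg_zero (n : ℕ) (p q : Polynomial S4) (hpq : Pn n = p * q)
    (hp : p.natDegree = 0) : IsUnit p := by
  have hc : p = Polynomial.C (p.coeff 0) := Polynomial.eq_C_of_natDegree_eq_zero hp
  set u := p.coeff 0 with hu
  have hd3 : u ∣ (X 3 : S4) := by
    refine ⟨q.coeff 2, ?_⟩
    rw [← Pn_coeff2 n, hpq, hc, Polynomial.coeff_C_mul]
  have hd12 : u ∣ (X 1 * X 2 : S4) := by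
    refine ⟨q.coeff 1, ?_⟩
    rw [← Pn_coeff1 n, hpq, hc, Polynomial.coeff_C_mul]
  obtain ⟨v, hv⟩ := hd3
  rcases prime_X3.irreducible.isUnit_or_isUnit hv with h | h
  · rw [hc]; exact Polynomial.isUnit_C.mpr h
  · exfalso
    obtain ⟨w, hw⟩ := h.exists_right_inv
    have hXu : (X 3 : S4) ∣ u := ⟨w, by rw [hv, mul_assoc, mul_comm v w, ← mul_assoc,
      mul_assoc, mul_comm w v, hw, mul_one]⟩
    exact X3_not_dvd (hXu.trans hd12)

lemma no_unit_lead (n : ℕ) (p q : Polynomial S4) (hpq : Pn n = p * q)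
    (hq1 : q.natDegree = 1) (hu : IsUnit q.leadingCoeff) : False := by
  obtain ⟨u, hu⟩ := hu
  have hq : q = Polynomial.C (q.coeff 1) * Polynomial.X + Polynomial.C (q.coeff 0) :=
    Polynomial.eq_X_add_C_of_natDegree_le_one (le_of_eq hq1)
  have hcoeff : q.coeff 1 = (u : S4) := by
    rw [hu, Polynomial.leadingCoeff, hq1]
  set r : S4 := -((u⁻¹ : S4ˣ) * q.coeff 0) with hr
  have hevalq : q.eval r = 0 := by
    rw [hq]
    simp only [Polynomial.eval_add, Polynomial.eval_mul, Polynomial.eval_C, Polynomial.eval_X]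
    rw [hcoeff, hr]
    have hmul : (u : S4) * (u⁻¹ : S4ˣ) = 1 := u.mul_inv
    linear_combination (-(q.coeff 0)) * hmul
  have : (Pn n).eval r = 0 := by
    rw [hpq, Polynomial.eval_mul, hevalq, mul_zero]
  exact Pn_no_root n r this

lemma Pn_irreducible (n : ℕ) : Irreducible (Pn n) := by
  constructor
  · intro hunit
    have := Polynomial.natDegree_eq_zero_of_isUnit hunit
    rw [Pn_natDegree] at this
    omega
  · intro p q hpq
    have hp0 : p ≠ 0 := by rintro rfl; exact Pn_ne_zero n (by simpa using hpq)
    have hq0 : q ≠ 0 := by rintro rfl; exact Pn_ne_zero n (by simpa using hpq)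
    have hsum : p.natDegree + q.natDegree = 2 := by
      rw [← Polynomial.natDegree_mul hp0 hq0, ← hpq, Pn_natDegree]
    rcases Nat.eq_zero_or_pos p.natDegree with hp | hp
    · exact Or.inl (unit_of_deg_zero n p q hpq hp)
    rcases Nat.eq_zero_or_pos q.natDegree with hq | hq
    · exact Or.inr (unit_of_deg_zero n q p (by rw [hpq, mul_comm]) hq)
    exfalso
    have hp1 : p.natDegree = 1 := by omega
    have hq1 : q.natDegree = 1 := by omega
    have lead : p.leadingCoeff * q.leadingCoeff = X 3 := by
      rw [← Polynomial.leadingCoeff_mul, ← hpq, Pn_leadingCoeff]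
    rcases prime_X3.2.2 p.leadingCoeff q.leadingCoeff ⟨1, by rw [lead, mul_one]⟩ with h | h
    · obtain ⟨t, ht⟩ := h
      have hqu : IsUnit q.leadingCoeff := by
        refine IsUnit.of_mul_eq_one t ?_
        have : (X 3 : S4) * (q.leadingCoeff * t) = (X 3 : S4) * 1 := by
          rw [mul_one]
          nth_rewrite 2 [← lead]
          rw [ht]; ring
        exact mul_left_cancel₀ (MvPolynomial.X_ne_zero 3) this
      exact no_unit_lead n p q hpq hq1 hqu
    · obtain ⟨t, ht⟩ := h
      have hpu : IsUnit p.leadingCoeff := by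
        refine IsUnit.of_mul_eq_one t ?_
        have : (X 3 : S4) * (p.leadingCoeff * t) = (X 3 : S4) * 1 := by
          rw [mul_one]
          nth_rewrite 2 [← lead]
          rw [ht]; ring
        exact mul_left_cancel₀ (MvPolynomial.X_ne_zero 3) this
      exact no_unit_lead n q p (by rw [hpq, mul_comm]) hp1 hpu

lemma bn_prime (n : ℕ) : Prime (bnRelation n) := by
  refine (MulEquiv.prime_iff psiEq.toMulEquiv).mp ?_
  have : Prime (Pn n) := (UniqueFactorizationMonoid.irreducible_iff_prime).mp (Pn_irreducible n)
  simpa [psi_bn n] using this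

/-- `B_n = ℂ[e,f,h,x,y]/(e y² + h x y - f x² - (h² + 4ef)^{n+1})` is an integral domain
for every `n ≥ 1`. -/
theorem bn_isDomain (n : ℕ) (hn : 1 ≤ n) :
    IsDomain (MvPolynomial (Fin 5) ℂ ⧸ Ideal.span {bnRelation n}) := by
  have hprime := bn_prime n
  haveI : (Ideal.span {bnRelation n}).IsPrime :=
    (Ideal.span_singleton_prime hprime.ne_zero).mpr hprime
  exact Ideal.Quotient.isDomain _
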